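/- Let L be a compact LOTS, let X be a compact Hausdorff space, let ω₁ + 1 be the set of ordinals ≤ ω₁ with its order topology, and let g : X × (ω₁ + 1) → L be continuous. Suppose that g(x,ξ) < g(x,η) for every x ∈ X and all ordinals ξ < η < ω₁. Then the set {g(x, ω₁) : x ∈ X} is finite. -/

import Mathlib

open Set Filter Topology

noncomputable section

/-- The first uncountable ordinal. -/
def omega1 : Ordinal.{0} := (Cardinal.aleph 1).ord

/-- `ω₁ + 1` as a linearly ordered set: the set of ordinals `≤ ω₁`. -/
abbrev Omega1Succ : Type 1 := ↥(Set.Iic omega1)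

/-- The order topology on `ω₁ + 1`. -/
instance : TopologicalSpace Omega1Succ := Preorder.topology Omega1Succ

instance : OrderTopology Omega1Succ := ⟨rfl⟩

/-- The top point `ω₁` of `ω₁ + 1`. -/
def w1top : Omega1Succ := ⟨omega1, Set.mem_Iic.mpr le_rfl⟩

lemma omega1_isLimit : Order.IsSuccLimit omega1 := Cardinal.isSuccLimit_ord (Cardinal.aleph0_le_aleph 1)

lemma exists_between_w1top {ζ : Omega1Succ} (h : ζ < w1top) : ∃ η, ζ < η ∧ η < w1top := by
  have h1 : ζ.1 < omega1 := h
  have h2 : ζ.1 + 1 < omega1 := omega1_isLimit.succ_lt h1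
  refine ⟨⟨ζ.1 + 1, le_of_lt h2⟩, ?_, h2⟩
  show ζ.1 < ζ.1 + 1
  rw [Ordinal.add_one_eq_succ]
  exact Order.lt_succ_of_not_isMax (by simp [not_isMax])

lemma countable_bound_w1 (f : ℕ → Omega1Succ) (h : ∀ n, f n < w1top) :
    ∃ ζ, ζ < w1top ∧ ∀ n, f n ≤ ζ := by
  have hsup : (⨆ n, (f n).1) < omega1 := by
    apply Ordinal.iSup_lt_ord
    · rw [omega1, Cardinal.isRegular_aleph_one.cof_eq]
      simpa using Cardinal.aleph0_lt_aleph_one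
    · exact fun n => h n
  refine ⟨⟨_, le_of_lt hsup⟩, hsup, fun n => ?_⟩
  exact_mod_cast Ordinal.le_iSup (fun n => (f n).1) n

lemma w1_bot_lt_top : ∃ ζ : Omega1Succ, ζ < w1top :=
  ⟨⟨0, le_of_lt omega1_isLimit.pos⟩, omega1_isLimit.pos⟩

/-- Neighborhoods of the top point contain a left interval. -/
lemma w1top_nbhd {U : Set Omega1Succ} (hU : U ∈ 𝓝 w1top) :
    ∃ ζ, ζ < w1top ∧ Ioc ζ w1top ⊆ U :=
  exists_Ioc_subset_of_mem_nhds hU w1_bot_lt_top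

/-- If `L` is a compact LOTS, `X` is compact Hausdorff, `g : X × (ω₁ + 1) → L` is
continuous, and `g (x, ξ) < g (x, η)` whenever `ξ < η < ω₁`, then
`{g (x, ω₁) : x ∈ X}` is finite. -/
theorem stmt17 {X : Type*} [TopologicalSpace X] [CompactSpace X] [T2Space X]
    {L : Type*} [LinearOrder L] [TopologicalSpace L] [OrderTopology L] [CompactSpace L]
    (g : X × Omega1Succ → L) (hg : Continuous g)
    (hmono : ∀ (x : X) (ξ η : Omega1Succ), ξ < η → η < w1top → g (x, ξ) < g (x, η)) :
    {l : L | ∃ x : X, g (x, w1top) = l}.Finite := by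
  -- continuity in the second variable
  have hc2 : ∀ x : X, Continuous (fun ξ : Omega1Succ => g (x, ξ)) :=
    fun x => hg.comp (Continuous.prodMk_right x)
  have hmono' : ∀ (x : X) (ξ η : Omega1Succ), ξ ≤ η → η < w1top → g (x, ξ) ≤ g (x, η) := by
    intro x ξ η hle hη
    rcases eq_or_lt_of_le hle with rfl | hlt
    · exact le_rfl
    · exact (hmono x ξ η hlt hη).le
  -- every value below top is below the top value
  have hlt_top : ∀ (x : X) (ξ : Omega1Succ), ξ < w1top → g (x, ξ) < g (x, w1top) := by
    intro x ξ hξ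
    by_contra hcon
    push_neg at hcon
    obtain ⟨η, hξη, hη⟩ := exists_between_w1top hξ
    have h1 : g (x, w1top) < g (x, η) := lt_of_le_of_lt hcon (hmono x ξ η hξη hη)
    have hV : (fun ζ : Omega1Succ => g (x, ζ)) ⁻¹' (Iio (g (x, η))) ∈ 𝓝 w1top :=
      (hc2 x).continuousAt.preimage_mem_nhds (Iio_mem_nhds h1)
    obtain ⟨ζ₀, hζ₀, hsub⟩ := w1top_nbhd hV
    obtain ⟨θ, hθ1, hθ2⟩ := exists_between_w1top (max_lt hζ₀ hη)
    have hmem : θ ∈ Ioc ζ₀ w1top := ⟨lt_of_le_of_lt (le_max_left _ _) hθ1, hθ2.le⟩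
    have := hsub hmem
    simp only [mem_preimage, mem_Iio] at this
    exact absurd (hmono x η θ (lt_of_le_of_lt (le_max_right _ _) hθ1) hθ2) (not_lt.mpr this.le)
  -- any value below the top value is exceeded at some stage below top
  have hreach : ∀ (x : X) (a : L), a < g (x, w1top) → ∃ ζ, ζ < w1top ∧ a < g (x, ζ) := by
    intro x a ha
    have hV : (fun ζ : Omega1Succ => g (x, ζ)) ⁻¹' (Ioi a) ∈ 𝓝 w1top :=
      (hc2 x).continuousAt.preimage_mem_nhds (Ioi_mem_nhds ha)
    obtain ⟨ζ₀, hζ₀, hsub⟩ := w1top_nbhd hV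
    obtain ⟨ζ, hζ1, hζ2⟩ := exists_between_w1top hζ₀
    exact ⟨ζ, hζ2, hsub ⟨hζ1, hζ2.le⟩⟩
  -- main argument
  by_contra hfin
  have hS : {l : L | ∃ x : X, g (x, w1top) = l}.Infinite := hfin
  set e := hS.natEmbedding with he
  choose xx hxx using fun n => (e n).2
  -- extract a strictly monotone subsequence
  obtain ⟨φ, hφ⟩ := exists_increasing_or_nonincreasing_subseq (α := L) (· < ·) (fun n => (e n : L))
  set u : ℕ → X := fun n => xx (φ n) with hu
  set t : ℕ → L := fun n => g (u n, w1top) with ht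
  have ht' : ∀ n, t n = ((e (φ n) : L)) := fun n => hxx (φ n)
  have htinj : Function.Injective t := by
    intro m n hmn
    have : e (φ m) = e (φ n) := Subtype.val_injective ((ht' m).symm.trans (hmn.trans (ht' n)))
    exact φ.injective (e.injective this)
  have hcase : StrictMono t ∨ StrictAnti t := by
    rcases hφ with h | h
    · left; intro m n hmn; rw [ht' m, ht' n]; exact h m n hmn
    · right; intro m n hmn
      have h1 : ¬ (e (φ m) : L) < (e (φ n) : L) := h m n hmn
      have h2 : t m ≠ t n := fun hc => absurd (htinj hc) (Nat.ne_of_lt hmn)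
      rw [ht' m, ht' n]
      rcases lt_trichotomy ((e (φ n) : L)) ((e (φ m) : L)) with h3 | h3 | h3
      · exact h3
      · exact absurd (by rw [ht' m, ht' n, h3]) h2
      · exact absurd h3 h1
  -- cluster point of the sequence u in X
  have : (Filter.map u atTop).NeBot := map_neBot
  obtain ⟨x, -, hx⟩ := isCompact_univ.exists_mapClusterPt (f := atTop) (u := u) (le_principal_iff.mpr univ_mem)
  set l : L := g (x, w1top) with hl
  have hlt : MapClusterPt l atTop t := by
    have : ContinuousAt (fun y : X => g (y, w1top)) x :=
      (hg.comp (Continuous.prodMk_left w1top)).continuousAt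
    have h2 := MapClusterPt.continuousAt_comp this hx
    exact h2
  have hfreq : ∀ V ∈ 𝓝 l, ∃ᶠ n in atTop, t n ∈ V := mapClusterPt_iff_frequently.mp hlt
  have hfrequ : ∀ V ∈ 𝓝 x, ∃ᶠ n in atTop, u n ∈ V := mapClusterPt_iff_frequently.mp hx
  rcases hcase with hincr | hdecr
  · -- increasing case
    have htl : ∀ n, t n < l := by
      intro n
      by_contra hcon
      push_neg at hcon
      have hV : Iio (t (n+1)) ∈ 𝓝 l :=
        Iio_mem_nhds (lt_of_le_of_lt hcon (hincr (Nat.lt_succ_self n)))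
      obtain ⟨m, hm1, hm2⟩ := ((hfreq _ hV).and_eventually (eventually_ge_atTop (n+1))).exists
      exact absurd hm1 (not_lt.mpr (hincr.le_iff_le.mpr hm2))
    choose ζ hζ1 hζ2 using fun n => hreach x (t n) (htl n)
    obtain ⟨ζs, hζs1, hζs2⟩ := countable_bound_w1 ζ hζ1
    have hb : ∀ n, t n < g (x, ζs) := fun n =>
      lt_of_lt_of_le (hζ2 n) (hmono' x (ζ n) ζs (hζs2 n) hζs1)
    have hbl : g (x, ζs) < l := hlt_top x ζs hζs1
    obtain ⟨m, hm⟩ := (hfreq _ (Ioi_mem_nhds hbl)).exists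
    exact absurd hm (not_lt.mpr (hb m).le)
  · -- decreasing case
    have hlt' : ∀ n, l < t n := by
      intro n
      by_contra hcon
      push_neg at hcon
      have hV : Ioi (t (n+1)) ∈ 𝓝 l :=
        Ioi_mem_nhds (lt_of_lt_of_le (hdecr (Nat.lt_succ_self n)) hcon)
      obtain ⟨m, hm1, hm2⟩ := ((hfreq _ hV).and_eventually (eventually_ge_atTop (n+1))).exists
      exact absurd hm1 (not_lt.mpr (hdecr.le_iff_ge.mpr hm2))
    choose ξ hξ1 hξ2 using fun n => hreach (u n) l (hlt' n)
    obtain ⟨ξs, hξs1, hξs2⟩ := countable_bound_w1 ξ hξ1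
    have hb : ∀ n, l < g (u n, ξs) := fun n =>
      lt_of_lt_of_le (hξ2 n) (hmono' (u n) (ξ n) ξs (hξs2 n) hξs1)
    have hU : (fun y : X => g (y, ξs)) ⁻¹' (Iio l) ∈ 𝓝 x := by
      have hcont : Continuous (fun y : X => g (y, ξs)) := hg.comp (Continuous.prodMk_left ξs)
      exact hcont.continuousAt.preimage_mem_nhds (Iio_mem_nhds (hlt_top x ξs hξs1))
    obtain ⟨m, hm⟩ := (hfrequ _ hU).exists
    exact absurd (hb m) (not_lt.mpr (le_of_lt hm))


end
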